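/- Let n ∈ ℕ and let f, g ∈ ℝ[x] be monic polynomials with deg f = n+1 and deg g = n. Assume f has n+1 distinct real roots λ_1 > λ_2 > … > λ_{n+1}, g has n distinct real roots μ_1 > … > μ_n, and the roots strictly interlace: λ_{k+1} < μ_k < λ_k for every k ∈ {1,…,n}. Then the Wronskian is strictly positive everywhere: f'(x)·g(x) − g'(x)·f(x) > 0 for every x ∈ ℝ. -/

import Mathlib

open Polynomial Finset

private lemma prod_sign_eq {ι : Type*} [DecidableEq ι] (s : Finset ι) (a : ι → ℝ) :
    ∏ j ∈ s, a j = (-1 : ℝ) ^ #(s.filter fun j => a j < 0) * ∏ j ∈ s, |a j| := by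
  have h : ∀ j ∈ s, a j = (if a j < 0 then (-1 : ℝ) else 1) * |a j| := by
    intro j _
    by_cases hj : a j < 0
    · simp [hj, abs_of_neg hj]
    · simp [hj, abs_of_nonneg (not_lt.1 hj)]
  rw [Finset.prod_congr rfl h, Finset.prod_mul_distrib]
  congr 1
  rw [Finset.prod_ite, Finset.prod_const, Finset.prod_const, one_pow, mul_one]

private lemma prod_mul_prod_pos {ι κ : Type*} [DecidableEq ι] [DecidableEq κ]
    (s : Finset ι) (t : Finset κ) (a : ι → ℝ) (b : κ → ℝ)
    (ha : ∀ j ∈ s, a j ≠ 0) (hb : ∀ j ∈ t, b j ≠ 0)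
    (hcard : #(s.filter fun j => a j < 0) = #(t.filter fun j => b j < 0)) :
    0 < (∏ j ∈ s, a j) * ∏ j ∈ t, b j := by
  rw [prod_sign_eq s a, prod_sign_eq t b, hcard]
  have h1 : 0 < ∏ j ∈ s, |a j| := Finset.prod_pos fun j hj => abs_pos.2 (ha j hj)
  have h2 : 0 < ∏ j ∈ t, |b j| := Finset.prod_pos fun j hj => abs_pos.2 (hb j hj)
  set cc := #(t.filter fun j => b j < 0)
  have key : ((-1 : ℝ) ^ cc) * ((-1 : ℝ) ^ cc) = 1 := by
    rw [← pow_add]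
    exact Even.neg_one_pow ⟨cc, rfl⟩
  calc 0 < (∏ j ∈ s, |a j|) * ∏ j ∈ t, |b j| := mul_pos h1 h2
    _ = ((-1 : ℝ) ^ cc * ∏ j ∈ s, |a j|) * ((-1 : ℝ) ^ cc * ∏ j ∈ t, |b j|) := by
        rw [mul_mul_mul_comm, key, one_mul]

private lemma card_filter_val_lt (n m : ℕ) :
    #(Finset.univ.filter fun j : Fin n => (j : ℕ) < m) = min m n := by
  rw [Finset.card_filter]
  rw [Fin.sum_univ_eq_sum_range (fun i => if i < m then (1 : ℕ) else 0)]
  rw [← Finset.card_filter]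
  have : (Finset.range n).filter (fun i => i < m) = Finset.range (min m n) := by
    ext i; simp; omega
  rw [this, Finset.card_range]

/-- If `f` and `g` are monic real polynomials of degrees `n+1` and `n` whose roots are all
real, simple, and strictly interlacing (`λ_{k+1} < μ_k < λ_k`), then the Wronskian
`f'·g − g'·f` is strictly positive on all of `ℝ`. -/
theorem interlacing_wronskian_pos
    (n : ℕ) (lam : Fin (n + 1) → ℝ) (mu : Fin n → ℝ)
    (hlam : StrictAnti lam) (hmu : StrictAnti mu)
    (hint : ∀ k : Fin n, lam k.succ < mu k ∧ mu k < lam k.castSucc)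
    (f g : Polynomial ℝ)
    (hf : f = ∏ k, (Polynomial.X - Polynomial.C (lam k)))
    (hg : g = ∏ k, (Polynomial.X - Polynomial.C (mu k))) :
    ∀ x : ℝ,
      0 < (Polynomial.derivative f).eval x * g.eval x
            - (Polynomial.derivative g).eval x * f.eval x := by
  intro x
  classical
  set d : Fin (n + 1) → ℝ := fun k => ∏ j ∈ Finset.univ.erase k, (lam k - lam j) with hd
  have hlaminj : Function.Injective lam := hlam.injective
  -- sign facts about lam k vs mu j
  have hmu_gt : ∀ (k : Fin (n + 1)) (j : Fin n), (j : ℕ) < (k : ℕ) → lam k < mu j := by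
    intro k j hjk
    have hle : j.succ ≤ k := by
      rw [Fin.le_def]; simpa using hjk
    exact lt_of_le_of_lt (hlam.antitone hle) (hint j).1
  have hmu_lt : ∀ (k : Fin (n + 1)) (j : Fin n), (k : ℕ) ≤ (j : ℕ) → mu j < lam k := by
    intro k j hjk
    have hle : k ≤ j.castSucc := by
      rw [Fin.le_def]; simpa using hjk
    exact lt_of_lt_of_le (hint j).2 (hlam.antitone hle)
  have hgnz : ∀ (k : Fin (n + 1)) (j : Fin n), lam k - mu j ≠ 0 := by
    intro k j
    rcases lt_or_ge (j : ℕ) (k : ℕ) with h | h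
    · exact sub_ne_zero.2 (ne_of_lt (hmu_gt k j h))
    · exact sub_ne_zero.2 (ne_of_gt (hmu_lt k j h))
  -- key sign lemma
  have hkey : ∀ k : Fin (n + 1), 0 < d k * g.eval (lam k) := by
    intro k
    rw [hg, eval_prod]
    simp only [eval_sub, eval_X, eval_C, hd]
    apply prod_mul_prod_pos
    · intro j hj
      exact sub_ne_zero.2 (fun h => (Finset.mem_erase.1 hj).1 (hlaminj h).symm)
    · intro j _
      exact hgnz k j
    · have h1 : ((Finset.univ.erase k).filter fun j => lam k - lam j < 0) = Finset.Iio k := by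
        ext j
        simp only [Finset.mem_filter, Finset.mem_erase, Finset.mem_univ, true_and,
          Finset.mem_Iio, sub_neg, hlam.lt_iff_gt, and_true]
        constructor
        · rintro ⟨_, h⟩; exact h
        · intro h; exact ⟨ne_of_lt h, h⟩
      have h2 : ((Finset.univ : Finset (Fin n)).filter fun j => lam k - mu j < 0) =
          Finset.univ.filter fun j : Fin n => (j : ℕ) < (k : ℕ) := by
        ext j
        simp only [Finset.mem_filter, Finset.mem_univ, true_and, sub_neg]
        constructor
        · intro h
          by_contra hc
          push_neg at hc
          exact absurd h (not_lt.2 (hmu_lt k j hc).le)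
        · intro h; exact hmu_gt k j h
      rw [h1, h2, Fin.card_Iio, card_filter_val_lt]
      have := k.isLt
      omega
  -- derivative of f at a root
  have hderiv_eval : ∀ k : Fin (n + 1), (Polynomial.derivative f).eval (lam k) = d k := by
    intro k
    have hfk : f = (X - C (lam k)) * ∏ j ∈ Finset.univ.erase k, (X - C (lam j)) := by
      rw [hf]
      exact (Finset.mul_prod_erase _ _ (Finset.mem_univ k)).symm
    rw [hfk, derivative_mul]
    simp [eval_prod, hd]
  by_cases hx : f.eval x = 0
  · -- x is a root of f
    have hx' : ∃ k : Fin (n + 1), x - lam k = 0 := by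
      rw [hf, eval_prod] at hx
      obtain ⟨k, -, hk⟩ := Finset.prod_eq_zero_iff.1 hx
      exact ⟨k, by simpa using hk⟩
    obtain ⟨k, hk⟩ := hx'
    have hxk : x = lam k := by linarith
    subst hxk
    rw [hx, mul_zero, sub_zero, hderiv_eval k]
    exact hkey k
  · -- x is not a root of f
    have hroot : ∀ k : Fin (n + 1), x - lam k ≠ 0 := by
      intro k hk
      apply hx
      rw [hf, eval_prod]
      exact Finset.prod_eq_zero (Finset.mem_univ k) (by simpa using hk)
    have hdnz : ∀ k, d k ≠ 0 := by
      intro k h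
      have := hkey k
      rw [h, zero_mul] at this
      exact lt_irrefl 0 this
    set c : Fin (n + 1) → ℝ := fun k => g.eval (lam k) * (d k)⁻¹ with hc
    have hcpos : ∀ k, 0 < c k := by
      intro k
      have h1 := hkey k
      have h2 : c k = (d k * g.eval (lam k)) * ((d k)⁻¹) ^ 2 := by
        have h3 : d k * (d k)⁻¹ = 1 := mul_inv_cancel₀ (hdnz k)
        simp only [hc]
        linear_combination (-(eval (lam k) g * (d k)⁻¹)) * h3
      rw [h2]
      exact mul_pos h1 (pow_two_pos_of_ne_zero (inv_ne_zero (hdnz k)))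
    -- Lagrange interpolation of g at the lam nodes
    have hdeg : g.degree < #(Finset.univ : Finset (Fin (n + 1))) := by
      rw [hg, Finset.card_univ, Fintype.card_fin]
      have : (∏ k : Fin n, (X - C (mu k))).degree = (n : WithBot ℕ) := by
        rw [Polynomial.degree_prod]
        simp [Polynomial.degree_X_sub_C]
      rw [this]
      exact_mod_cast Nat.lt_succ_self n
    have hginterp : g = Lagrange.interpolate Finset.univ lam fun i => g.eval (lam i) :=
      Lagrange.eq_interpolate (hlaminj.injOn) hdeg
    -- pointwise partial fraction expansion
    have hsum : ∀ y : ℝ, f.eval y ≠ 0 →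
        g.eval y / f.eval y = ∑ k, c k * (y - lam k)⁻¹ := by
      intro y hy
      have hyk : ∀ k : Fin (n + 1), y - lam k ≠ 0 := by
        intro k hk
        apply hy
        rw [hf, eval_prod]
        exact Finset.prod_eq_zero (Finset.mem_univ k) (by simpa using hk)
      conv_lhs => rw [hginterp]
      rw [Lagrange.interpolate_apply, eval_finset_sum, Finset.sum_div]
      apply Finset.sum_congr rfl
      intro k _
      rw [eval_mul, eval_C]
      have hbasis : (Lagrange.basis Finset.univ lam k).eval y =
          (d k)⁻¹ * ∏ j ∈ Finset.univ.erase k, (y - lam j) := by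
        rw [Lagrange.basis, eval_prod]
        have : ∀ j ∈ Finset.univ.erase k,
            (Lagrange.basisDivisor (lam k) (lam j)).eval y =
              (lam k - lam j)⁻¹ * (y - lam j) := by
          intro j _
          simp [Lagrange.basisDivisor]
        rw [Finset.prod_congr rfl this, Finset.prod_mul_distrib, ← Finset.prod_inv_distrib]
      have hfy : f.eval y = (y - lam k) * ∏ j ∈ Finset.univ.erase k, (y - lam j) := by
        rw [hf, eval_prod]
        rw [← Finset.mul_prod_erase _ _ (Finset.mem_univ k)]
        simp
      have hFnz : (∏ j ∈ Finset.univ.erase k, (y - lam j)) ≠ 0 := by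
        intro h0
        apply hy
        rw [hfy, h0, mul_zero]
      rw [hbasis, hfy, hc]
      field_simp
    -- differentiate both sides at x
    have hopen : IsOpen {y : ℝ | f.eval y ≠ 0} :=
      isOpen_compl_singleton.preimage f.continuous
    have hU : (fun y => g.eval y / f.eval y) =ᶠ[nhds x] fun y => ∑ k, c k * (y - lam k)⁻¹ := by
      filter_upwards [hopen.mem_nhds hx] with y hy using hsum y hy
    have h1 : HasDerivAt (fun y => g.eval y / f.eval y)
        (((derivative g).eval x * f.eval x - g.eval x * (derivative f).eval x)
          / f.eval x ^ 2) x :=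
      (g.hasDerivAt x).div (f.hasDerivAt x) hx
    have h2 : HasDerivAt (fun y => ∑ k, c k * (y - lam k)⁻¹)
        (∑ k, c k * (-1 / (x - lam k) ^ 2)) x := by
      apply HasDerivAt.fun_sum
      intro k _
      exact ((((hasDerivAt_id x).sub_const (lam k)).inv (hroot k))).const_mul (c k)
    have h2' : HasDerivAt (fun y => g.eval y / f.eval y)
        (∑ k, c k * (-1 / (x - lam k) ^ 2)) x :=
      h2.congr_of_eventuallyEq hU
    have huniq := h1.unique h2'
    rw [div_eq_iff (pow_ne_zero 2 hx)] at huniq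
    set S : ℝ := ∑ k, c k * (1 / (x - lam k) ^ 2) with hS
    have hT : (∑ k, c k * (-1 / (x - lam k) ^ 2)) = -S := by
      rw [hS, ← Finset.sum_neg_distrib]
      apply Finset.sum_congr rfl
      intro k _
      ring
    rw [hT] at huniq
    have hSpos : 0 < S := by
      rw [hS]
      apply Finset.sum_pos
      · intro k _
        exact mul_pos (hcpos k) (div_pos one_pos (pow_two_pos_of_ne_zero (hroot k)))
      · exact Finset.univ_nonempty
    have hfin : (derivative f).eval x * g.eval x - (derivative g).eval x * f.eval x
        = S * f.eval x ^ 2 := by linear_combination -huniq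
    rw [hfin]
    exact mul_pos hSpos (pow_two_pos_of_ne_zero hx)
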